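/- If A is a good bounded pseudo-hoop, then for all x, y ∈ A, (x⊙y)^{-∼} ≥ x^{-∼} ⊙ y^{-∼}, where x^- = x→0 and x^∼ = x⇝0. -/
import Mathlib


universe u v

class PseudoHoop (A : Type u) extends One A, Mul A where
  rimp : A → A → A
  limp : A → A → A
  mul_one' : ∀ x : A, x * 1 = x
  one_mul' : ∀ x : A, 1 * x = x
  rimp_self : ∀ x : A, rimp x x = 1
  limp_self : ∀ x : A, limp x x = 1
  mul_rimp : ∀ x y z : A, rimp (x * y) z = rimp x (rimp y z)
  mul_limp : ∀ x y z : A, limp (x * y) z = limp y (limp x z)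
  div₁ : ∀ x y : A, (rimp x y) * x = (rimp y x) * y
  div₂ : ∀ x y : A, (rimp x y) * x = x * (limp x y)
  div₃ : ∀ x y : A, x * (limp x y) = y * (limp y x)

namespace PseudoHoop

/-- The order on a pseudo-hoop: `x ≤ y` iff `x → y = 1`. -/
def ple {A : Type u} [PseudoHoop A] (x y : A) : Prop := rimp x y = 1

/-- The meet `x ∧ y = (x → y) ⊙ x`. -/
def meet {A : Type u} [PseudoHoop A] (x y : A) : A := (rimp x y) * x

/-- `x ∨₁ y = (x → y) ⇝ y`. -/
def join₁ {A : Type u} [PseudoHoop A] (x y : A) : A := limp (rimp x y) y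

/-- `x ∨₂ y = (x ⇝ y) → y`. -/
def join₂ {A : Type u} [PseudoHoop A] (x y : A) : A := rimp (limp x y) y

/-- Iterated implication: `x →⁰ y = y`, `x →ⁿ⁺¹ y = x → (x →ⁿ y)`. -/
def rimpPow {A : Type u} [PseudoHoop A] (x : A) : ℕ → A → A
  | 0, y => y
  | n + 1, y => rimp x (rimpPow x n y)

/-- A filter of a pseudo-hoop. -/
structure IsFilter {A : Type u} [PseudoHoop A] (F : Set A) : Prop where
  nonempty : F.Nonempty
  mul_mem : ∀ {x y : A}, x ∈ F → y ∈ F → x * y ∈ F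
  upward : ∀ {x y : A}, x ∈ F → ple x y → y ∈ F

/-- A normal filter: `x → y ∈ F` iff `x ⇝ y ∈ F`. -/
def IsNormalFilter {A : Type u} [PseudoHoop A] (F : Set A) : Prop :=
  IsFilter F ∧ ∀ x y : A, rimp x y ∈ F ↔ limp x y ∈ F

def IsProper {A : Type u} [PseudoHoop A] (F : Set A) : Prop := F ≠ Set.univ

/-- A pseudo-hoop is simple if `{1}` is its unique proper filter. -/
def IsSimple (A : Type u) [PseudoHoop A] : Prop :=
  ∀ F : Set A, IsFilter F → IsProper F → F = {1}

/-- A pseudo-hoop is Wajsberg if `x ∨₁ y = y ∨₁ x` and `x ∨₂ y = y ∨₂ x`. -/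
def IsWajsberg (A : Type u) [PseudoHoop A] : Prop :=
  ∀ x y : A, join₁ x y = join₁ y x ∧ join₂ x y = join₂ y x

/-- A fantastic filter. -/
def IsFantasticFilter {A : Type u} [PseudoHoop A] (F : Set A) : Prop :=
  IsFilter F ∧ ∀ x y : A,
    (rimp y x ∈ F → rimp (join₁ x y) x ∈ F) ∧
    (limp y x ∈ F → limp (join₂ x y) x ∈ F)

def IS₂ {A : Type u} [PseudoHoop A] (μ : A → A) : Prop :=
  ∀ x y : A, μ (x * y) = μ x * μ (limp x (x * y)) ∧
    μ (x * y) = μ (rimp y (x * y)) * μ y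

def IS₃ {A : Type u} [PseudoHoop A] (μ : A → A) : Prop :=
  ∀ x y : A, μ (μ x * μ y) = μ x * μ y

def IS₄ {A : Type u} [PseudoHoop A] (μ : A → A) : Prop :=
  ∀ x y : A, μ (rimp (μ x) (μ y)) = rimp (μ x) (μ y) ∧
    μ (limp (μ x) (μ y)) = limp (μ x) (μ y)

/-- Type I state operator. -/
def IsStateI {A : Type u} [PseudoHoop A] (μ : A → A) : Prop :=
  (∀ x y : A, μ (rimp x y) = rimp (μ (join₁ x y)) (μ y) ∧
      μ (limp x y) = limp (μ (join₂ x y)) (μ y)) ∧ IS₂ μ ∧ IS₃ μ ∧ IS₄ μ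

/-- Type II state operator. -/
def IsStateII {A : Type u} [PseudoHoop A] (μ : A → A) : Prop :=
  (∀ x y : A, μ (rimp x y) = rimp (μ (join₁ y x)) (μ y) ∧
      μ (limp x y) = limp (μ (join₂ y x)) (μ y)) ∧ IS₂ μ ∧ IS₃ μ ∧ IS₄ μ

/-- Type III state operator. -/
def IsStateIII {A : Type u} [PseudoHoop A] (μ : A → A) : Prop :=
  (∀ x y : A, μ (rimp x y) = rimp (μ x) (μ (meet x y)) ∧
      μ (limp x y) = limp (μ x) (μ (meet x y))) ∧ IS₂ μ ∧ IS₃ μ ∧ IS₄ μ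

end PseudoHoop

open PseudoHoop

/-- A bounded pseudo-hoop: a pseudo-hoop with a least element `0`. -/
class BoundedPseudoHoop (A : Type u) extends PseudoHoop A, Zero A where
  zero_le : ∀ x : A, rimp 0 x = 1

namespace BoundedPseudoHoop

/-- `x⁻ = x → 0`. -/
def negr {A : Type u} [BoundedPseudoHoop A] (x : A) : A := rimp x 0

/-- `x∼ = x ⇝ 0`. -/
def negl {A : Type u} [BoundedPseudoHoop A] (x : A) : A := limp x 0

/-- A bounded pseudo-hoop is good if `x⁻∼ = x∼⁻` for all `x`. -/
def IsGood (A : Type u) [BoundedPseudoHoop A] : Prop :=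
  ∀ x : A, negl (negr x) = negr (negl x)

/-- A bounded pseudo-hoop is involutive if `x⁻∼ = x∼⁻ = x` for all `x`. -/
def IsInvolutive (A : Type u) [BoundedPseudoHoop A] : Prop :=
  ∀ x : A, negl (negr x) = x ∧ negr (negl x) = x

/-- The set of dense elements. -/
def Den (A : Type u) [BoundedPseudoHoop A] : Set A :=
  {x : A | negl (negr x) = 1}

/-- An involutive filter: `x⁻∼ → x ∈ F` and `x∼⁻ ⇝ x ∈ F` for all `x`. -/
def IsInvolutiveFilter {A : Type u} [BoundedPseudoHoop A] (F : Set A) : Prop :=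
  IsFilter F ∧ ∀ x : A, rimp (negl (negr x)) x ∈ F ∧ limp (negr (negl x)) x ∈ F

end BoundedPseudoHoop

open BoundedPseudoHoop

section Aux

variable {A : Type u} [BoundedPseudoHoop A]

open PseudoHoop BoundedPseudoHoop

/-- `x⁻ ⊙ x = 0`. -/
lemma aux_l1 (x : A) : rimp x 0 * x = 0 := by
  have h := div₁ x (0 : A)
  rwa [BoundedPseudoHoop.zero_le, one_mul'] at h

/-- `x ⊙ x∼ = 0`. -/
lemma aux_l2 (x : A) : x * limp x 0 = 0 := by
  have h := div₂ x (0 : A)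
  rw [← h]
  exact aux_l1 x

lemma aux_rimp_one (x : A) : rimp x 1 = 1 := by
  have h : rimp x (rimp (limp x 0) (limp x 0)) = 1 := by
    rw [← mul_rimp, aux_l2, BoundedPseudoHoop.zero_le]
  rwa [rimp_self] at h

lemma aux_rimp_one_left (x : A) : rimp 1 x = x := by
  have h := div₁ (1 : A) x
  rwa [aux_rimp_one, one_mul', mul_one'] at h

lemma aux_limp_one_left (x : A) : limp 1 x = x := by
  have h := div₂ (1 : A) x
  rw [aux_rimp_one_left, mul_one', one_mul'] at h
  exact h.symm

lemma aux_limp_one (x : A) : limp x 1 = 1 := by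
  have hx : x * limp x 1 = x := by
    rw [div₃ x 1, aux_limp_one_left, one_mul']
  have h : limp (x * limp x 1) 1 = limp x 1 := by rw [hx]
  rw [mul_limp, limp_self] at h
  exact h.symm

/-- `x → y = 1` implies `x ⇝ y = 1`. -/
lemma aux_r2l {x y : A} (h : rimp x y = 1) : limp x y = 1 := by
  have h2 : x * limp x y = x := by rw [← div₂, h, one_mul']
  have h3 : x = y * limp y x := by rw [← div₃, h2]
  calc limp x y = limp (y * limp y x) y := by rw [← h3]
    _ = limp (limp y x) (limp y y) := by rw [mul_limp]
    _ = 1 := by rw [limp_self, aux_limp_one]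

/-- `x ⇝ y = 1` implies `x → y = 1`. -/
lemma aux_l2r {x y : A} (h : limp x y = 1) : rimp x y = 1 := by
  have h2 : rimp x y * x = x := by rw [div₂, h, mul_one']
  have h3 : x = rimp y x * y := by rw [← div₁, h2]
  calc rimp x y = rimp (rimp y x * y) y := by rw [← h3]
    _ = rimp (rimp y x) (rimp y y) := by rw [mul_rimp]
    _ = 1 := by rw [rimp_self, aux_rimp_one]

lemma aux_trans_r {a b c : A} (h1 : rimp a b = 1) (h2 : rimp b c = 1) :
    rimp a c = 1 := by
  have h3 : rimp b a * b = a := by rw [← div₁, h1, one_mul']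
  calc rimp a c = rimp (rimp b a * b) c := by rw [h3]
    _ = rimp (rimp b a) (rimp b c) := by rw [mul_rimp]
    _ = 1 := by rw [h2, aux_rimp_one]

lemma aux_trans_l {a b c : A} (h1 : limp a b = 1) (h2 : limp b c = 1) :
    limp a c = 1 := by
  have h3 : b * limp b a = a := by rw [← div₃, h1, mul_one']
  calc limp a c = limp (b * limp b a) c := by rw [h3]
    _ = limp (limp b a) (limp b c) := by rw [mul_limp]
    _ = 1 := by rw [h2, aux_limp_one]

lemma aux_antisym {a b : A} (h1 : rimp a b = 1) (h2 : rimp b a = 1) : a = b := by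
  have h3 : rimp b a * b = a := by rw [← div₁, h1, one_mul']
  rw [h2, one_mul'] at h3
  exact h3.symm

/-- Monotonicity of multiplication on the left. -/
lemma aux_mono {a b : A} (c : A) (h : rimp a b = 1) : rimp (c * a) (c * b) = 1 := by
  apply aux_l2r
  rw [mul_limp]
  have hb : limp b (limp c (c * b)) = 1 := by
    rw [← mul_limp, limp_self]
  exact aux_trans_l (aux_r2l h) hb

/-- Galois property: `a ≤ b∼` iff `b ≤ a⁻`. -/
lemma aux_galois {a b : A} : rimp a (limp b 0) = 1 ↔ rimp b (rimp a 0) = 1 := by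
  constructor
  · intro h
    have hl := aux_r2l h
    rw [← mul_limp] at hl
    have hr := aux_l2r hl
    rwa [mul_rimp] at hr
  · intro h
    rw [← mul_rimp] at h
    have hl := aux_r2l h
    rw [mul_limp] at hl
    exact aux_l2r hl

/-- `z ≤ z⁻∼`. -/
lemma aux_le_nn (z : A) : rimp z (limp (rimp z 0) 0) = 1 := by
  apply aux_l2r
  rw [← mul_limp, aux_l1, limp_self]

/-- `z ≤ z∼⁻`. -/
lemma aux_le_nn' (z : A) : rimp z (rimp (limp z 0) 0) = 1 := by
  rw [← mul_rimp, aux_l2, BoundedPseudoHoop.zero_le]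

/-- Antitonicity of `⁻`. -/
lemma aux_antitone_r {a b : A} (h : rimp a b = 1) :
    rimp (rimp b 0) (rimp a 0) = 1 := by
  rw [← mul_rimp]
  have h1 := aux_mono (rimp b 0) h
  rwa [aux_l1] at h1

/-- Triple negation: `y⁻∼⁻ = y⁻`. -/
lemma aux_triple (y : A) : rimp (limp (rimp y 0) 0) 0 = rimp y 0 :=
  aux_antisym (aux_antitone_r (aux_le_nn y)) (aux_le_nn' (rimp y 0))

/-- In a good bounded pseudo-hoop, `x → y⁻ ≤ x⁻∼ → y⁻`. -/
lemma aux_step5 (hg : IsGood A) (x y : A) :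
    rimp (rimp x (rimp y 0)) (rimp (limp (rimp x 0) 0) (rimp y 0)) = 1 := by
  set a := rimp x (rimp y 0) with ha
  set nx := limp (rimp x 0) 0 with hnx
  -- goodness: `y⁻ = (y⁻⁻)∼`
  have hG2 : limp (rimp (rimp y 0) 0) 0 = rimp y 0 := by
    have h := hg (rimp y 0)
    simp only [negr, negl] at h
    rw [h, aux_triple]
  rw [← mul_rimp, ← hG2]
  apply aux_galois.mpr
  rw [mul_rimp, hnx, aux_triple, ← mul_rimp a x 0, ← mul_rimp]
  have k : rimp (a * x) (rimp y 0) = 1 := by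
    rw [mul_rimp, ha, rimp_self]
  have h1 := aux_mono (rimp (rimp y 0) 0) k
  rwa [aux_l1] at h1

end Aux

theorem stmt2 {A : Type u} [BoundedPseudoHoop A] (hg : IsGood A) (x y : A) :
    ple (negl (negr x) * negl (negr y)) (negl (negr (x * y))) := by
  simp only [ple, negl, negr]
  apply aux_galois.mpr
  rw [mul_rimp x y 0, mul_rimp (limp (rimp x 0) 0) _ 0, aux_triple y]
  exact aux_step5 hg x y
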